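/- Suppose X ⊆ 2^ω is nice, i.e., for every Borel function x ↦ f^x ∈ ω^ω there exists g with ∀x∈X ∃^∞n f^x(n)=g(n). Then for every Borel function x ↦ (Y^x, f^x) ∈ [ω]^ω × ω^ω there exists g ∈ ω^ω such that for every x ∈ X there are infinitely many n ∈ Y^x with f^x(n) = g(n). -/

import Mathlib

/-- `X` is nice. -/
def Nice (X : Set (ℕ → Bool)) : Prop :=
  ∀ f : (ℕ → Bool) → ℕ → ℕ, Measurable f →
    ∃ g : ℕ → ℕ, ∀ x ∈ X, {n : ℕ | f x n = g n}.Infinite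

namespace NiceAux

variable (Y : (ℕ → Bool) → ℕ → Bool) (f : (ℕ → Bool) → ℕ → ℕ)

/-- the increasing enumeration of `Y x`. -/
noncomputable def eY (x : ℕ → Bool) (i : ℕ) : ℕ := Nat.nth (fun k => Y x k = true) i

/-- the list of the first `2^n` elements of `Y x` together with their `f x`-values. -/
noncomputable def trueList (x : ℕ → Bool) (n : ℕ) : List (ℕ × ℕ) :=
  (List.range (2 ^ n)).map fun i => (eY Y x i, f x (eY Y x i))

/-- the coded Borel function to which niceness is applied. -/
noncomputable def Fenc (x : ℕ → Bool) (n : ℕ) : ℕ := Encodable.encode (trueList Y f x n)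

/-- the decoded claim list at index `n`, filtered by the size bound `2^n`. -/
def Dg (g : ℕ → ℕ) (n : ℕ) : List (ℕ × ℕ) :=
  match Encodable.decode (α := List (ℕ × ℕ)) (g n) with
  | some L => if L.length ≤ 2 ^ n then L else []
  | none => []

def keys (L : List (ℕ × ℕ)) : List ℕ := L.map Prod.fst

/-- the decoded guess: at position `k`, use the first-mentioning claim list. -/
noncomputable def gdec (g : ℕ → ℕ) (k : ℕ) : ℕ :=
  (((Dg g (sInf {n | k ∈ keys (Dg g n)})).find? (fun p => p.1 == k)).map Prod.snd).getD 0

theorem length_trueList (x : ℕ → Bool) (n : ℕ) : (trueList Y f x n).length = 2 ^ n := by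
  simp [trueList]

theorem length_Dg_le (g : ℕ → ℕ) (n : ℕ) : (Dg g n).length ≤ 2 ^ n := by
  unfold Dg
  rcases h : Encodable.decode (α := List (ℕ × ℕ)) (g n) with _ | L
  · simp
  · by_cases hL : L.length ≤ 2 ^ n <;> simp [hL]

theorem Dg_eq_of_match {g : ℕ → ℕ} {x : ℕ → Bool} {n : ℕ} (hm : Fenc Y f x n = g n) :
    Dg g n = trueList Y f x n := by
  unfold Dg
  rw [← hm]
  unfold Fenc
  rw [Encodable.encodek]
  simp [length_trueList]

theorem keys_trueList (x : ℕ → Bool) (n : ℕ) :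
    keys (trueList Y f x n) = (List.range (2 ^ n)).map (eY Y x) := by
  simp [keys, trueList, List.map_map]

theorem eY_injective {x : ℕ → Bool} (hx : {k | Y x k = true}.Infinite) :
    Function.Injective (eY Y x) :=
  Nat.nth_injective hx

theorem eY_mem {x : ℕ → Bool} (hx : {k | Y x k = true}.Infinite) (i : ℕ) :
    Y x (eY Y x i) = true :=
  Nat.nth_mem_of_infinite hx i

theorem find?_trueList {x : ℕ → Bool} (hx : {k | Y x k = true}.Infinite) {n k : ℕ}
    (hk : k ∈ keys (trueList Y f x n)) :
    (((trueList Y f x n).find? (fun p => p.1 == k)).map Prod.snd).getD 0 = f x k := by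
  rw [keys_trueList] at hk
  rcases List.mem_map.mp hk with ⟨i, hi, rfl⟩
  rcases hfind : (trueList Y f x n).find? (fun p => p.1 == eY Y x i) with _ | q
  · exfalso
    have hmem : (eY Y x i, f x (eY Y x i)) ∈ trueList Y f x n :=
      List.mem_map.mpr ⟨i, hi, rfl⟩
    have := List.find?_eq_none.mp hfind _ hmem
    simp at this
  · have hq1 : q.1 = eY Y x i := by
      have := List.find?_some hfind
      simpa using this
    have hqmem := List.mem_of_find?_eq_some hfind
    simp only [trueList, List.mem_map, List.mem_range] at hqmem
    rcases hqmem with ⟨j, hj, hqe⟩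
    subst hqe
    rw [hfind]
    simpa using congrArg (f x) hq1

theorem sum_two_pow (N : ℕ) : (∑ m ∈ Finset.range N, 2 ^ m) = 2 ^ N - 1 := by
  induction N with
  | zero => simp
  | succ N ih =>
    rw [Finset.sum_range_succ, ih, pow_succ]
    have h1 : 1 ≤ 2 ^ N := Nat.one_le_two_pow
    omega

/-- key counting lemma: at a matching index there is a freshly mentioned position. -/
theorem exists_fresh {g : ℕ → ℕ} {x : ℕ → Bool} {n : ℕ}
    (hx : {k | Y x k = true}.Infinite) (hDn : Dg g n = trueList Y f x n) :
    ∃ k, k ∈ keys (Dg g n) ∧ ∀ m < n, k ∉ keys (Dg g m) := by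
  classical
  have hA : ((keys (Dg g n)).toFinset).card = 2 ^ n := by
    rw [hDn, keys_trueList]
    rw [List.toFinset_card_of_nodup (List.Nodup.map (eY_injective Y hx) List.nodup_range)]
    simp
  set B : Finset ℕ := (Finset.range n).biUnion (fun m => (keys (Dg g m)).toFinset) with hB
  have hBcard : B.card ≤ 2 ^ n - 1 := by
    refine le_trans (Finset.card_biUnion_le) ?_
    refine le_trans (Finset.sum_le_sum (fun m _ => ?_)) (le_of_eq (sum_two_pow n))
    refine le_trans (List.toFinset_card_le _) ?_
    simpa [keys] using length_Dg_le g m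
  have hsub : ¬ ((keys (Dg g n)).toFinset ⊆ B) := by
    intro hs
    have := Finset.card_le_card hs
    have h1 : 1 ≤ 2 ^ n := Nat.one_le_two_pow
    omega
  obtain ⟨k, hk1, hk2⟩ := Finset.not_subset.mp hsub
  refine ⟨k, List.mem_toFinset.mp hk1, fun m hm hkm => ?_⟩
  exact hk2 (Finset.mem_biUnion.mpr ⟨m, Finset.mem_range.mpr hm, List.mem_toFinset.mpr hkm⟩)

/-- value of the decoded guess at a freshly mentioned position of a matching index. -/
theorem gdec_eq {g : ℕ → ℕ} {x : ℕ → Bool} {n k : ℕ}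
    (hx : {k | Y x k = true}.Infinite) (hDn : Dg g n = trueList Y f x n)
    (hk1 : k ∈ keys (Dg g n)) (hk2 : ∀ m < n, k ∉ keys (Dg g m)) :
    gdec g k = f x k := by
  have hninf : sInf {m | k ∈ keys (Dg g m)} = n := by
    have hne : n ∈ {m | k ∈ keys (Dg g m)} := hk1
    have hmem := Nat.sInf_mem (⟨n, hne⟩ : {m | k ∈ keys (Dg g m)}.Nonempty)
    have hle := Nat.sInf_le hne
    rcases Nat.lt_or_ge (sInf {m | k ∈ keys (Dg g m)}) n with h | h
    · exact absurd hmem (hk2 _ h)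
    · omega
  rw [gdec, hninf, hDn]
  exact find?_trueList Y f hx (hDn ▸ hk1)



section Meas

theorem measY_set (hY : Measurable Y) (a : ℕ) : MeasurableSet {x | Y x a = true} := by
  have h1 : Measurable fun x => Y x a := (measurable_pi_apply a).comp hY
  exact h1 (measurableSet_singleton true)

theorem measf_set (hf : Measurable f) (a b : ℕ) : MeasurableSet {x | f x a = b} := by
  have h1 : Measurable fun x => f x a := (measurable_pi_apply a).comp hf
  exact h1 (measurableSet_singleton b)

theorem meas_count (hY : Measurable Y) (a : ℕ) :
    Measurable fun x => Nat.count (fun k => Y x k = true) a := by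
  induction a with
  | zero => simpa [Nat.count_zero] using measurable_const
  | succ a ih =>
    simp only [Nat.count_succ]
    exact ih.add (Measurable.ite (measY_set Y hY a) measurable_const measurable_const)

theorem meas_eY_set (hY : Measurable Y) (hYinf : ∀ x, {n : ℕ | Y x n = true}.Infinite)
    (i a : ℕ) : MeasurableSet {x | eY Y x i = a} := by
  have hset : {x | eY Y x i = a}
      = {x | Y x a = true} ∩ {x | Nat.count (fun k => Y x k = true) a = i} := by
    ext x
    simp only [Set.mem_setOf_eq, Set.mem_inter_iff]
    constructor
    · intro h
      have hpa : Y x a = true := by rw [← h]; exact eY_mem Y (hYinf x) i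
      refine ⟨hpa, ?_⟩
      rw [← h]
      exact Nat.count_nth_of_infinite (hYinf x) i
    · rintro ⟨hpa, hcnt⟩
      rw [eY, ← hcnt]
      exact Nat.nth_count hpa
  rw [hset]
  exact (measY_set Y hY a).inter ((meas_count Y hY a) (measurableSet_singleton i))

theorem meas_eY_fun (hY : Measurable Y) (hYinf : ∀ x, {n : ℕ | Y x n = true}.Infinite)
    (i : ℕ) : Measurable fun x => eY Y x i := by
  apply measurable_to_countable'
  intro a
  exact meas_eY_set Y hY hYinf i a

theorem meas_feY (hY : Measurable Y) (hf : Measurable f)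
    (hYinf : ∀ x, {n : ℕ | Y x n = true}.Infinite) (i : ℕ) :
    Measurable fun x => f x (eY Y x i) := by
  apply measurable_to_countable'
  intro b
  have hset : (fun x => f x (eY Y x i)) ⁻¹' {b}
      = ⋃ a, ({x | eY Y x i = a} ∩ {x | f x a = b}) := by
    ext x
    simp only [Set.mem_preimage, Set.mem_singleton_iff, Set.mem_iUnion, Set.mem_inter_iff,
      Set.mem_setOf_eq]
    constructor
    · intro h
      exact ⟨eY Y x i, rfl, h⟩
    · rintro ⟨a, ha, hb⟩
      rw [ha]
      exact hb
  rw [hset]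
  exact MeasurableSet.iUnion fun a => (meas_eY_set Y hY hYinf i a).inter (measf_set f hf a b)

theorem trueList_eq_ofFn (x : ℕ → Bool) (n : ℕ) :
    trueList Y f x n
      = List.ofFn (fun i : Fin (2 ^ n) => (eY Y x i.1, f x (eY Y x i.1))) := by
  apply List.ext_getElem <;> simp [trueList]

theorem meas_Fenc (hY : Measurable Y) (hf : Measurable f)
    (hYinf : ∀ x, {n : ℕ | Y x n = true}.Infinite) : Measurable (Fenc Y f) := by
  apply measurable_pi_lambda
  intro n
  have hV : Measurable fun x => (fun i : Fin (2 ^ n) => (eY Y x i.1, f x (eY Y x i.1))) := by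
    apply measurable_pi_lambda
    intro i
    exact (meas_eY_fun Y hY hYinf i.1).prod (meas_feY Y f hY hf hYinf i.1)
  have hψ : Measurable fun v : Fin (2 ^ n) → ℕ × ℕ => Encodable.encode (List.ofFn v) :=
    measurable_of_countable _
  have heq : (fun x => Fenc Y f x n)
      = (fun v : Fin (2 ^ n) → ℕ × ℕ => Encodable.encode (List.ofFn v)) ∘
        (fun x => (fun i : Fin (2 ^ n) => (eY Y x i.1, f x (eY Y x i.1)))) := by
    funext x
    simp only [Function.comp_apply, Fenc, trueList_eq_ofFn]
  rw [heq]
  exact hψ.comp hV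

end Meas

end NiceAux

theorem nice_infinitely_equal_on_prescribed_sets (X : Set (ℕ → Bool)) (hX : Nice X)
    (Y : (ℕ → Bool) → ℕ → Bool) (f : (ℕ → Bool) → ℕ → ℕ)
    (hY : Measurable Y) (hf : Measurable f)
    (hYinf : ∀ x : ℕ → Bool, {n : ℕ | Y x n = true}.Infinite) :
    ∃ g : ℕ → ℕ, ∀ x ∈ X, {n : ℕ | Y x n = true ∧ f x n = g n}.Infinite := by
  classical
  obtain ⟨g, hg⟩ := hX (NiceAux.Fenc Y f) (NiceAux.meas_Fenc Y f hY hf hYinf)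
  refine ⟨NiceAux.gdec g, ?_⟩
  intro x hxX
  have hx : {k : ℕ | Y x k = true}.Infinite := hYinf x
  have hGOOD : {n : ℕ | NiceAux.Fenc Y f x n = g n}.Infinite := hg x hxX
  have hPex : ∀ n, ∃ k, (n ∈ {n : ℕ | NiceAux.Fenc Y f x n = g n} →
      (k ∈ NiceAux.keys (NiceAux.Dg g n) ∧ ∀ m < n, k ∉ NiceAux.keys (NiceAux.Dg g m))) := by
    intro n
    by_cases hn : n ∈ {n : ℕ | NiceAux.Fenc Y f x n = g n}
    · obtain ⟨k, hk⟩ := NiceAux.exists_fresh Y f hx (NiceAux.Dg_eq_of_match Y f hn)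
      exact ⟨k, fun _ => hk⟩
    · exact ⟨0, fun h => absurd h hn⟩
  choose w hwP using hPex
  have hinj : Set.InjOn w {n : ℕ | NiceAux.Fenc Y f x n = g n} := by
    intro a ha b hb hab
    by_contra hne
    rcases Nat.lt_or_ge a b with h | h
    · have hmem : w b ∈ NiceAux.keys (NiceAux.Dg g a) := by
        rw [← hab]; exact (hwP a ha).1
      exact (hwP b hb).2 a h hmem
    · have hlt : b < a := by omega
      have hmem : w a ∈ NiceAux.keys (NiceAux.Dg g b) := by
        rw [hab]; exact (hwP b hb).1
      exact (hwP a ha).2 b hlt hmem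
  have hmaps : Set.MapsTo w {n : ℕ | NiceAux.Fenc Y f x n = g n}
      {k : ℕ | Y x k = true ∧ f x k = NiceAux.gdec g k} := by
    intro n hn
    have hDn := NiceAux.Dg_eq_of_match Y f (hn : NiceAux.Fenc Y f x n = g n)
    have hPn := hwP n hn
    have hk : w n ∈ NiceAux.keys (NiceAux.trueList Y f x n) := hDn ▸ hPn.1
    rw [NiceAux.keys_trueList] at hk
    rcases List.mem_map.mp hk with ⟨i, _, hik⟩
    refine ⟨?_, ?_⟩
    · rw [← hik]; exact NiceAux.eY_mem Y hx i
    · exact (NiceAux.gdec_eq Y f hx hDn hPn.1 hPn.2).symm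
  exact Set.infinite_of_injOn_mapsTo hinj hmaps hGOOD
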